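/- For every μ > 0 there exists C > 0 such that for every w ∈ ℝ with 0 < |w| ≤ 1/2, the improper integral F(w) := lim_{R→∞} ∫_0^R 2η·cos(2πηw)/(8π²η² + 2μ) dη exists and satisfies |F(w)| ≤ C·log(1/|w|). -/

import Mathlib

open Filter MeasureTheory intervalIntegral Set

lemma aux_main (b c : ℝ) (hb : 0 < b) (hc : 0 < c) (a : ℝ) (ha : 0 < a) :
    ∃ F : ℝ,
      Tendsto (fun R : ℝ => ∫ η in (0:ℝ)..R, 2 * η / (b * η ^ 2 + c) * Real.cos (a * η))
        atTop (nhds F) ∧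
      |F| ≤ (1/b) * (Real.log (b * (1/a) ^ 2 + c) - Real.log c) + 4 / b := by
  set t : ℝ := 1/a with htdef
  have ht : 0 < t := by positivity
  have hta : t * a = 1 := by rw [htdef, one_div, inv_mul_cancel₀ ha.ne']
  set g : ℝ → ℝ := fun η => 2 * η / (b * η ^ 2 + c) with hgdef
  set g' : ℝ → ℝ := fun η => (2 * c - 2 * b * η ^ 2) / (b * η ^ 2 + c) ^ 2 with hg'def
  have hD : ∀ η : ℝ, 0 < b * η ^ 2 + c := fun η => by positivity
  -- derivative of g
  have hg : ∀ η : ℝ, HasDerivAt g (g' η) η := by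
    intro η
    have h1 : HasDerivAt (fun x : ℝ => 2 * x) 2 η := by
      simpa using (hasDerivAt_id η).const_mul 2
    have h2 : HasDerivAt (fun x : ℝ => b * x ^ 2 + c) (2 * b * η) η := by
      have := ((hasDerivAt_pow 2 η).const_mul b).add_const c
      refine this.congr_deriv ?_; push_cast; ring
    have h3 := h1.div h2 (hD η).ne'
    refine h3.congr_deriv ?_
    simp only [hg'def]
    field_simp
    ring
  -- derivative of sin(aη)/a
  have hv : ∀ η : ℝ, HasDerivAt (fun x : ℝ => Real.sin (a * x) / a) (Real.cos (a * η)) η := by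
    intro η
    have h1 : HasDerivAt (fun x : ℝ => a * x) a η := by
      simpa using (hasDerivAt_id η).const_mul a
    have h2 := (Real.hasDerivAt_sin (a * η)).comp η h1
    have h3 := h2.div_const a
    refine h3.congr_deriv ?_
    field_simp
  -- continuity facts
  have cden : Continuous fun η : ℝ => b * η ^ 2 + c :=
    (continuous_const.mul (continuous_pow 2)).add continuous_const
  have cg : Continuous g :=
    Continuous.div (continuous_const.mul continuous_id) cden (fun η => (hD η).ne')
  have cg' : Continuous g' :=
    Continuous.div (continuous_const.sub (continuous_const.mul (continuous_pow 2)))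
      (cden.pow 2) (fun η => (pow_pos (hD η) 2).ne')
  have ccos : Continuous fun η : ℝ => Real.cos (a * η) :=
    Real.continuous_cos.comp (continuous_const.mul continuous_id)
  have csin : Continuous fun η : ℝ => Real.sin (a * η) / a :=
    (Real.continuous_sin.comp (continuous_const.mul continuous_id)).div_const a
  -- integration by parts identity
  have hI : ∀ R : ℝ, (∫ η in (0:ℝ)..R, g η * Real.cos (a * η)) =
      (∫ η in (0:ℝ)..t, g η * Real.cos (a * η)) +
      (g R * (Real.sin (a * R) / a) - g t * (Real.sin (a * t) / a)
        - ∫ η in t..R, g' η * (Real.sin (a * η) / a)) := by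
    intro R
    have hadd := integral_add_adjacent_intervals (a := (0:ℝ)) (b := t) (c := R)
      (f := fun η => g η * Real.cos (a * η)) (μ := volume)
      ((cg.mul ccos).intervalIntegrable 0 t) ((cg.mul ccos).intervalIntegrable t R)
    rw [← hadd]
    congr 1
    exact integral_mul_deriv_eq_deriv_mul (fun x _ => hg x) (fun x _ => hv x)
      (cg'.intervalIntegrable t R) (ccos.intervalIntegrable t R)
  -- pointwise bound for the tail integrand
  have habs_sin : ∀ y : ℝ, |Real.sin y| ≤ 1 :=
    fun y => abs_le.mpr ⟨Real.neg_one_le_sin y, Real.sin_le_one y⟩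
  have hg'bd : ∀ x : ℝ, |g' x| ≤ 2 / (b * x ^ 2 + c) := by
    intro x
    rw [hg'def]
    rw [abs_div, abs_of_pos (pow_pos (hD x) 2), div_le_div_iff₀ (pow_pos (hD x) 2) (hD x)]
    have h4 : |2 * c - 2 * b * x ^ 2| ≤ 2 * c + 2 * b * x ^ 2 := by
      calc |2 * c - 2 * b * x ^ 2| ≤ |2*c| + |2*b*x^2| := abs_sub _ _
      _ = 2 * c + 2 * b * x ^ 2 := by
          rw [abs_of_pos (by positivity), abs_of_nonneg (by positivity)]
    nlinarith [sq_nonneg (b * x ^ 2 + c), hD x]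
  have hbound : ∀ x : ℝ, x ∈ Ioi t →
      ‖g' x * (Real.sin (a * x) / a)‖ ≤ (2 / (a * b)) * x ^ (-2 : ℝ) := by
    intro x hx
    have hx0 : 0 < x := lt_trans ht hx
    have hrw : x ^ (-2 : ℝ) = (x ^ 2)⁻¹ := by
      rw [show (-2 : ℝ) = -(2:ℕ) by norm_num, Real.rpow_neg hx0.le, Real.rpow_natCast]
    have h2 : 2 / (b * x ^ 2 + c) ≤ 2 / (b * x ^ 2) := by
      rw [div_le_div_iff₀ (hD x) (by positivity)]
      nlinarith [hc, sq_nonneg x]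
    have h3 : |Real.sin (a * x) / a| ≤ 1 / a := by
      rw [abs_div, abs_of_pos ha]
      gcongr
      exact habs_sin _
    calc ‖g' x * (Real.sin (a * x) / a)‖ = |g' x| * |Real.sin (a * x) / a| := abs_mul _ _
    _ ≤ (2 / (b * x ^ 2)) * (1 / a) :=
        mul_le_mul ((hg'bd x).trans h2) h3 (abs_nonneg _) (by positivity)
    _ = (2 / (a * b)) * x ^ (-2 : ℝ) := by rw [hrw]; field_simp
  -- integrability of the tail integrand on Ioi t
  have hmaj : IntegrableOn (fun x : ℝ => (2 / (a * b)) * x ^ (-2 : ℝ)) (Ioi t) volume :=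
    (integrableOn_Ioi_rpow_of_lt (by norm_num) ht).const_mul _
  have hint : IntegrableOn (fun x : ℝ => g' x * (Real.sin (a * x) / a)) (Ioi t) volume := by
    apply Integrable.mono' hmaj
    · exact ((cg'.mul csin).aestronglyMeasurable).restrict
    · exact (ae_restrict_iff' measurableSet_Ioi).2 (ae_of_all _ hbound)
  -- the boundary term tends to 0
  have hT1 : Tendsto (fun R : ℝ => g R * (Real.sin (a * R) / a)) atTop (nhds 0) := by
    have hev : ∀ᶠ R in atTop, ‖g R * (Real.sin (a * R) / a)‖ ≤ (2 / (a * b)) * R⁻¹ := by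
      filter_upwards [eventually_gt_atTop (0:ℝ)] with R hR
      have h1 : |g R| ≤ 2 / (b * R) := by
        rw [hgdef]
        rw [abs_div, abs_of_pos (hD R), abs_of_pos (by positivity : (0:ℝ) < 2 * R),
          div_le_div_iff₀ (hD R) (by positivity)]
        nlinarith [hc]
      have h3 : |Real.sin (a * R) / a| ≤ 1 / a := by
        rw [abs_div, abs_of_pos ha]
        gcongr
        exact habs_sin _
      calc ‖g R * (Real.sin (a * R) / a)‖ = |g R| * |Real.sin (a * R) / a| := abs_mul _ _
      _ ≤ (2 / (b * R)) * (1 / a) := mul_le_mul h1 h3 (abs_nonneg _) (by positivity)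
      _ = (2 / (a * b)) * R⁻¹ := by field_simp
    exact squeeze_zero_norm' hev (by simpa using tendsto_inv_atTop_zero.const_mul (2 / (a * b)))
  -- the tail integral converges
  have hT3 : Tendsto (fun R : ℝ => ∫ η in t..R, g' η * (Real.sin (a * η) / a)) atTop
      (nhds (∫ η in Ioi t, g' η * (Real.sin (a * η) / a))) :=
    intervalIntegral_tendsto_integral_Ioi t hint tendsto_id
  -- assemble the limit
  set A : ℝ := ∫ η in (0:ℝ)..t, g η * Real.cos (a * η) with hAdef
  set B : ℝ := g t * (Real.sin (a * t) / a) with hBdef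
  set T : ℝ := ∫ η in Ioi t, g' η * (Real.sin (a * η) / a) with hTdef
  refine ⟨A - B - T, ?_, ?_⟩
  · have : Tendsto (fun R : ℝ => A + (g R * (Real.sin (a * R) / a) - B
        - ∫ η in t..R, g' η * (Real.sin (a * η) / a))) atTop (nhds (A + (0 - B - T))) :=
      tendsto_const_nhds.add ((hT1.sub tendsto_const_nhds).sub hT3)
    have heq : (fun R : ℝ => ∫ η in (0:ℝ)..R, 2 * η / (b * η ^ 2 + c) * Real.cos (a * η))
        = fun R : ℝ => A + (g R * (Real.sin (a * R) / a) - B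
          - ∫ η in t..R, g' η * (Real.sin (a * η) / a)) := by
      funext R; exact hI R
    rw [heq]
    convert this using 2
    ring
  -- the bound
  · have hA : |A| ≤ (1/b) * (Real.log (b * t ^ 2 + c) - Real.log c) := by
      have h1 : |A| ≤ ∫ η in (0:ℝ)..t, |g η * Real.cos (a * η)| :=
        abs_integral_le_integral_abs ht.le
      have h2 : (∫ η in (0:ℝ)..t, |g η * Real.cos (a * η)|) ≤ ∫ η in (0:ℝ)..t, g η := by
        apply integral_mono_on ht.le ((cg.mul ccos).abs.intervalIntegrable 0 t)
          (cg.intervalIntegrable 0 t)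
        intro x hx
        calc |g x * Real.cos (a * x)| = |g x| * |Real.cos (a * x)| := abs_mul _ _
        _ ≤ |g x| * 1 := by
            gcongr
            exact abs_le.mpr ⟨Real.neg_one_le_cos _, Real.cos_le_one _⟩
        _ = |g x| := mul_one _
        _ = g x := abs_of_nonneg (by
            rw [hgdef]
            exact div_nonneg (by linarith [hx.1]) (hD x).le)
      have h3 : (∫ η in (0:ℝ)..t, g η)
          = (1/b) * Real.log (b * t ^ 2 + c) - (1/b) * Real.log c := by
        have hφ : ∀ x ∈ uIcc (0:ℝ) t,
            HasDerivAt (fun y : ℝ => (1/b) * Real.log (b * y ^ 2 + c)) (g x) x := by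
          intro x _
          have h2' : HasDerivAt (fun y : ℝ => b * y ^ 2 + c) (2 * b * x) x := by
            have := ((hasDerivAt_pow 2 x).const_mul b).add_const c
            refine this.congr_deriv ?_; push_cast; ring
          have hl := (Real.hasDerivAt_log (hD x).ne').comp x h2'
          have := hl.const_mul (1/b)
          refine this.congr_deriv ?_
          rw [hgdef]
          field_simp
        have := integral_eq_sub_of_hasDerivAt hφ (cg.intervalIntegrable 0 t)
        rw [this]
        norm_num
      rw [h3] at h2
      calc |A| ≤ (1/b) * Real.log (b * t ^ 2 + c) - (1/b) * Real.log c := h1.trans h2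
      _ = (1/b) * (Real.log (b * t ^ 2 + c) - Real.log c) := by ring
    have hB : |B| ≤ 2 / b := by
      have h1 : |g t| ≤ 2 / (b * t) := by
        rw [hgdef]
        rw [abs_div, abs_of_pos (hD t), abs_of_pos (by positivity : (0:ℝ) < 2 * t),
          div_le_div_iff₀ (hD t) (by positivity)]
        nlinarith [hc]
      have h3 : |Real.sin (a * t) / a| ≤ 1 / a := by
        rw [abs_div, abs_of_pos ha]
        gcongr
        exact habs_sin _
      calc |B| = |g t| * |Real.sin (a * t) / a| := abs_mul _ _
      _ ≤ (2 / (b * t)) * (1 / a) := mul_le_mul h1 h3 (abs_nonneg _) (by positivity)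
      _ = 2 / (b * (t * a)) := by field_simp
      _ = 2 / b := by rw [hta, mul_one]
    have hT : |T| ≤ 2 / b := by
      have h1 : |T| ≤ ∫ η in Ioi t, ‖g' η * (Real.sin (a * η) / a)‖ := by
        rw [← Real.norm_eq_abs]
        exact MeasureTheory.norm_integral_le_integral_norm _
      have h2 : (∫ η in Ioi t, ‖g' η * (Real.sin (a * η) / a)‖)
          ≤ ∫ η in Ioi t, (2 / (a * b)) * η ^ (-2 : ℝ) :=
        setIntegral_mono_on hint.norm hmaj measurableSet_Ioi hbound
      have h3 : (∫ η in Ioi t, (2 / (a * b)) * η ^ (-2 : ℝ)) = 2 / b := by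
        rw [MeasureTheory.integral_const_mul, integral_Ioi_rpow_of_lt (by norm_num) ht]
        rw [show (-2 : ℝ) + 1 = -1 by norm_num, Real.rpow_neg_one]
        rw [htdef]
        field_simp
      calc |T| ≤ ∫ η in Ioi t, (2 / (a * b)) * η ^ (-2 : ℝ) := h1.trans h2
      _ = 2 / b := h3
    have htri : |A - B - T| ≤ |A| + |B| + |T| := by
      calc |A - B - T| ≤ |A - B| + |T| := abs_sub _ _
      _ ≤ |A| + |B| + |T| := by linarith [abs_sub A B]
    calc |A - B - T| ≤ |A| + |B| + |T| := htri
    _ ≤ (1/b) * (Real.log (b * t ^ 2 + c) - Real.log c) + 2/b + 2/b := by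
        linarith [hA, hB, hT]
    _ = (1/b) * (Real.log (b * (1/a) ^ 2 + c) - Real.log c) + 4 / b := by
        rw [htdef]; ring
/-- Logarithmic bound for the conditionally convergent Fourier integral
`F(w) = ∫_0^∞ 2η cos(2πηw)/(8π²η²+2μ) dη`, for `0 < |w| ≤ 1/2`. -/
theorem stmt_19 (μ : ℝ) (hμ : 0 < μ) :
    ∃ C > (0:ℝ), ∀ w : ℝ, 0 < |w| → |w| ≤ 1/2 →
      ∃ F : ℝ,
        Tendsto (fun R : ℝ =>
            ∫ η in (0:ℝ)..R, 2 * η * Real.cos (2 * Real.pi * η * w) /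
              (8 * Real.pi ^ 2 * η ^ 2 + 2 * μ)) atTop (nhds F) ∧
        |F| ≤ C * Real.log (1 / |w|) := by
  have hπ : 0 < Real.pi := Real.pi_pos
  set b : ℝ := 8 * Real.pi ^ 2 with hbdef
  set c : ℝ := 2 * μ with hcdef
  clear_value b c
  have hb : 0 < b := by rw [hbdef]; positivity
  have hc : 0 < c := by rw [hcdef]; positivity
  set D : ℝ := (b / (4 * Real.pi ^ 2) + c) / c with hDdef
  clear_value D
  have hD0 : 0 < D := by rw [hDdef]; positivity
  have hD1 : 1 ≤ D := by
    rw [hDdef, le_div_iff₀ hc]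
    have : 0 < b / (4 * Real.pi ^ 2) := by positivity
    linarith
  have hlogD : 0 ≤ Real.log D := Real.log_nonneg hD1
  have hlog2 : 0 < Real.log 2 := Real.log_pos (by norm_num)
  set K : ℝ := (1/b) * Real.log D + 4 / b with hKdef
  clear_value K
  have hK : 0 ≤ K := by
    rw [hKdef]
    exact add_nonneg (mul_nonneg (by positivity) hlogD) (by positivity)
  refine ⟨K / Real.log 2 + 2 / b + 1, ?_, ?_⟩
  · have h1 : 0 ≤ K / Real.log 2 := div_nonneg hK hlog2.le
    have h2 : 0 < 2 / b := by positivity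
    linarith
  intro w hw hw2
  set W : ℝ := |w| with hWdef
  clear_value W
  have hW : 0 < W := hw
  have hWle : W ≤ 1/2 := hw2
  set a : ℝ := 2 * Real.pi * W with hadef
  clear_value a
  have ha : 0 < a := by rw [hadef]; positivity
  obtain ⟨F, hF1, hF2⟩ := aux_main b c hb hc a ha
  have hfun : (fun η : ℝ => 2 * η * Real.cos (2 * Real.pi * η * w) /
      (b * η ^ 2 + c))
      = fun η : ℝ => 2 * η / (b * η ^ 2 + c) * Real.cos (a * η) := by
    funext η
    have hcos : Real.cos (2 * Real.pi * η * w) = Real.cos (a * η) := by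
      rcases abs_cases w with ⟨h, _⟩ | ⟨h, _⟩
      · rw [hadef, hWdef, h]; ring_nf
      · rw [hadef, hWdef, h, show 2 * Real.pi * -w * η = -(2 * Real.pi * η * w) by ring,
          Real.cos_neg]
    rw [hcos]
    ring
  refine ⟨F, ?_, ?_⟩
  · have : (fun R : ℝ => ∫ η in (0:ℝ)..R, 2 * η * Real.cos (2 * Real.pi * η * w) /
        (b * η ^ 2 + c))
        = fun R : ℝ => ∫ η in (0:ℝ)..R, 2 * η / (b * η ^ 2 + c) * Real.cos (a * η) := by
      funext R
      rw [hfun]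
    rw [this]
    exact hF1
  -- the bound
  set L : ℝ := Real.log (1 / W) with hLdef
  clear_value L
  have hL2 : Real.log 2 ≤ L := by
    rw [hLdef]
    apply Real.log_le_log (by norm_num)
    rw [le_div_iff₀ hW]
    linarith
  have hL0 : 0 < L := lt_of_lt_of_le hlog2 hL2
  have hW2 : 0 < W ^ 2 := by positivity
  have key1 : b * (1/a) ^ 2 + c ≤ (D * c) / W ^ 2 := by
    rw [le_div_iff₀ hW2, hadef]
    have e1 : (b * (1 / (2 * Real.pi * W)) ^ 2 + c) * W ^ 2
        = b / (4 * Real.pi ^ 2) + c * W ^ 2 := by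
      field_simp
      ring
    have e2 : D * c = b / (4 * Real.pi ^ 2) + c := by
      rw [hDdef]; field_simp
    rw [e1, e2]
    have hWsq : W ^ 2 ≤ 1 := by nlinarith [hW, hWle]
    nlinarith [mul_le_mul_of_nonneg_left hWsq hc.le]
  have hlog : Real.log (b * (1/a) ^ 2 + c) - Real.log c ≤ Real.log D + 2 * L := by
    have h1 : Real.log (b * (1/a) ^ 2 + c) ≤ Real.log ((D * c) / W ^ 2) :=
      Real.log_le_log (by positivity) key1
    have h2 : Real.log ((D * c) / W ^ 2) = Real.log D + Real.log c + 2 * L := by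
      rw [Real.log_div (by positivity) (by positivity),
        Real.log_mul hD0.ne' hc.ne', Real.log_pow, hLdef, one_div, Real.log_inv]
      push_cast
      ring
    linarith
  have h5 : K ≤ (K / Real.log 2) * L := by
    rw [div_mul_eq_mul_div, le_div_iff₀ hlog2]
    nlinarith [mul_le_mul_of_nonneg_left hL2 hK]
  have h6 : (1/b) * (Real.log (b * (1/a) ^ 2 + c) - Real.log c) + 4 / b
      ≤ K + (2/b) * L := by
    have hmul := mul_le_mul_of_nonneg_left hlog (le_of_lt (by positivity : (0:ℝ) < 1/b))
    calc (1/b) * (Real.log (b * (1/a) ^ 2 + c) - Real.log c) + 4 / b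
        ≤ (1/b) * (Real.log D + 2 * L) + 4 / b := by linarith
    _ = K + (2/b) * L := by rw [hKdef]; ring
  have hCL : (K / Real.log 2 + 2 / b + 1) * L = (K / Real.log 2) * L + (2/b) * L + L := by
    ring
  calc |F| ≤ (1/b) * (Real.log (b * (1/a) ^ 2 + c) - Real.log c) + 4 / b := hF2
  _ ≤ K + (2/b) * L := h6
  _ ≤ (K / Real.log 2) * L + (2/b) * L + L := by linarith
  _ = (K / Real.log 2 + 2 / b + 1) * L := hCL.symm
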